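/- Let G be a finite group. If the commutator subgroup of the enveloping group A(G) of the conjugacy quandle of G has cardinality strictly greater than the cardinality of the commutator subgroup of G (in particular if it is infinite while the commutator subgroup of G is finite), then there exists a symmetric 2-cocycle on G with values in ℂˣ that is not a coboundary. -/

import Mathlib

/-- A 2-cocycle on a group `G` with values in `ℂˣ` (trivial action). -/
def IsTwoCocycle {G : Type*} [Group G] (α : G → G → ℂˣ) : Prop :=
  ∀ g h k : G, α g h * α (g * h) k = α g (h * k) * α h k

/-- A 2-cocycle is symmetric if `α g h = α h g` for all `g h`. -/
def IsSymmCocycle {G : Type*} [Group G] (α : G → G → ℂˣ) : Prop :=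
  ∀ g h : G, α g h = α h g

/-- A 2-cocycle is a coboundary if `α g h = β g * β h * (β (g*h))⁻¹` for some `β`. -/
def IsCoboundary {G : Type*} [Group G] (α : G → G → ℂˣ) : Prop :=
  ∃ β : G → ℂˣ, ∀ g h : G, α g h = β g * β h * (β (g * h))⁻¹

/-- Relations `e_g e_h e_g⁻¹ = e_{g h g⁻¹}` defining the enveloping group of the
conjugacy quandle of `G`. -/
def conjQuandleRels (G : Type*) [Group G] : Set (FreeGroup G) :=
  { r | ∃ g h : G, r = FreeGroup.of g * FreeGroup.of h * (FreeGroup.of g)⁻¹ *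
      (FreeGroup.of (g * h * g⁻¹))⁻¹ }

/-- The enveloping group `A(G)` of the conjugacy quandle of `G`, as a presented group. -/
abbrev EnvelopingGroup (G : Type*) [Group G] : Type _ :=
  PresentedGroup (conjQuandleRels G)

namespace EnvAux

variable {G : Type*} [Group G]

abbrev e (g : G) : EnvelopingGroup G := PresentedGroup.of g

lemma rel_conj (g h : G) : e g * e h * (e g)⁻¹ = e (g * h * g⁻¹) := by
  have hm : (FreeGroup.of g * FreeGroup.of h * (FreeGroup.of g)⁻¹ *
      (FreeGroup.of (g * h * g⁻¹))⁻¹) ∈ Subgroup.normalClosure (conjQuandleRels G) :=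
    Subgroup.subset_normalClosure ⟨g, h, rfl⟩
  have h1 : (PresentedGroup.mk (conjQuandleRels G)) (FreeGroup.of g * FreeGroup.of h *
      (FreeGroup.of g)⁻¹ * (FreeGroup.of (g * h * g⁻¹))⁻¹) = 1 :=
    (QuotientGroup.eq_one_iff _).mpr hm
  rw [map_mul, map_mul, map_mul, map_inv, map_inv, mul_inv_eq_one] at h1
  exact h1

def pr : EnvelopingGroup G →* G :=
  PresentedGroup.toGroup (f := id) (by
    rintro r ⟨g, h, rfl⟩
    simp)

@[simp] lemma pr_e (g : G) : pr (e g) = g := PresentedGroup.toGroup.of _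

lemma conj_e (a : EnvelopingGroup G) : ∀ k : G, a * e k * a⁻¹ = e (pr a * k * (pr a)⁻¹) := by
  induction a using PresentedGroup.induction_on with
  | H z =>
    induction z using FreeGroup.induction_on with
    | C1 => intro k; simp [map_one]
    | of g =>
      intro k
      show e g * e k * (e g)⁻¹ = e (pr (e g) * k * (pr (e g))⁻¹)
      rw [pr_e]
      exact rel_conj g k
    | inv_of g ih =>
      intro k
      show (e g)⁻¹ * e k * ((e g)⁻¹)⁻¹ = e (pr (e g)⁻¹ * k * (pr (e g)⁻¹)⁻¹)
      have h2 : e g * e (g⁻¹ * k * g) * (e g)⁻¹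
          = e (pr (e g) * (g⁻¹ * k * g) * (pr (e g))⁻¹) := ih _
      rw [pr_e] at h2
      have h4 : g * (g⁻¹ * k * g) * g⁻¹ = k := by group
      rw [h4] at h2
      rw [map_inv, pr_e, ← h2]
      group
    | mul x y ihx ihy =>
      intro k
      rw [map_mul]
      set X := (PresentedGroup.mk (conjQuandleRels G)) x
      set Y := (PresentedGroup.mk (conjQuandleRels G)) y
      have hre : X * Y * e k * (X * Y)⁻¹ = X * (Y * e k * Y⁻¹) * X⁻¹ := by group
      rw [hre, ihy k, ihx (pr Y * k * (pr Y)⁻¹), map_mul]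
      congr 1
      group

lemma central_of_pr_eq_one {a : EnvelopingGroup G} (ha : pr a = 1) :
    a ∈ Subgroup.center (EnvelopingGroup G) := by
  rw [Subgroup.mem_center_iff]
  intro b
  have key : ∀ k : G, Commute a (e k) := by
    intro k
    have hck := conj_e a k
    rw [ha] at hck
    simp only [one_mul, inv_one, mul_one] at hck
    show a * e k = e k * a
    exact mul_inv_eq_iff_eq_mul.mp hck
  induction b using PresentedGroup.induction_on with
  | H z =>
    induction z using FreeGroup.induction_on with
    | C1 => simp [map_one]
    | of g => exact ((key g).symm).eq
    | inv_of g ih =>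
      show ((e g : EnvelopingGroup G))⁻¹ * a = a * (e g)⁻¹
      exact (((key g).inv_right).symm).eq
    | mul x y ihx ihy =>
      rw [map_mul, mul_assoc, ihy, ← mul_assoc, ihx, mul_assoc]

end EnvAux


namespace EnvAux

variable {G : Type*} [Group G]

/-- the central 2-cocycle with values in `ker pr` -/
def c (g h : G) : EnvelopingGroup G := e g * e h * (e (g * h))⁻¹

lemma pr_c (g h : G) : pr (c g h) = 1 := by simp [c]

lemma c_central (g h : G) : c g h ∈ Subgroup.center (EnvelopingGroup G) :=
  central_of_pr_eq_one (pr_c g h)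

lemma c_comm (g h : G) (a : EnvelopingGroup G) : c g h * a = a * c g h :=
  ((Subgroup.mem_center_iff.mp (c_central g h)) a).symm

lemma c_mul_e (g h : G) : c g h * e (g * h) = e g * e h := by
  simp [c, mul_assoc]

lemma c_symm (g h : G) : c g h = c h g := by
  have conj' : (e g)⁻¹ * e (g * h) * e g = e (h * g) := by
    have hc := conj_e ((e g)⁻¹ : EnvelopingGroup G) (g * h)
    rw [map_inv, pr_e, inv_inv] at hc
    rw [show g⁻¹ * (g * h) * g⁻¹⁻¹ = h * g from by group] at hc
    exact hc
  apply mul_right_cancel (b := e (h * g))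
  calc c g h * e (h * g)
      = c g h * ((e g)⁻¹ * e (g * h) * e g) := by rw [conj']
    _ = (e g)⁻¹ * (c g h * e (g * h)) * e g := by
        rw [show (e g)⁻¹ * (c g h * e (g * h)) * e g
            = (e g)⁻¹ * c g h * e (g * h) * e g from by group, ← c_comm]
        group
    _ = (e g)⁻¹ * (e g * e h) * e g := by rw [c_mul_e]
    _ = e h * e g := by group
    _ = c h g * e (h * g) := by rw [c_mul_e]

lemma c_cocycle (g h k : G) : c g h * c (g * h) k = c g (h * k) * c h k := by
  have cm : c g (h * k) * e (g * h * k) = e g * e (h * k) := by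
    have := c_mul_e g (h * k)
    rw [← mul_assoc g h k] at this
    exact this
  apply mul_right_cancel (b := e (g * h * k))
  calc c g h * c (g * h) k * e (g * h * k)
      = c g h * (c (g * h) k * e (g * h * k)) := by rw [mul_assoc]
    _ = c g h * (e (g * h) * e k) := by rw [c_mul_e]
    _ = c g h * e (g * h) * e k := by rw [mul_assoc]
    _ = e g * e h * e k := by rw [c_mul_e]
    _ = e g * (c h k * e (h * k)) := by rw [c_mul_e, mul_assoc]
    _ = c h k * (e g * e (h * k)) := by
        rw [← mul_assoc, ← c_comm, mul_assoc]
    _ = c h k * (c g (h * k) * e (g * h * k)) := by rw [cm]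
    _ = c g (h * k) * c h k * e (g * h * k) := by
        rw [← mul_assoc, c_comm]

/-- quandle-type identity -/
lemma c_quandle (g h : G) : c g h = c (g * h * g⁻¹) g := by
  have key : e g * e h = e (g * h * g⁻¹) * e g := by
    have := rel_conj g h
    rw [← this]; group
  rw [c, c, key, show g * h * g⁻¹ * g = g * h from by group]

end EnvAux

noncomputable section

namespace EnvAux

/-- exponential as a hom `ℚ →+ Additive ℂˣ` -/
def expHom : ℚ →+ Additive ℂˣ where
  toFun q := Additive.ofMul (Units.mk0 (Complex.exp (2 * Real.pi * Complex.I * (q : ℂ)))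
    (Complex.exp_ne_zero _))
  map_zero' := by
    rw [ofMul_eq_zero]
    ext
    simp
  map_add' a b := by
    have h : Complex.exp (2 * Real.pi * Complex.I * ((a + b : ℚ) : ℂ))
        = Complex.exp (2 * Real.pi * Complex.I * (a : ℂ)) *
          Complex.exp (2 * Real.pi * Complex.I * (b : ℂ)) := by
      push_cast
      rw [mul_add, Complex.exp_add]
    show Additive.ofMul _ = Additive.ofMul _ + Additive.ofMul _
    rw [← ofMul_mul]
    exact congrArg Additive.ofMul (by ext; simpa using h)

lemma expHom_ker : ∀ q ∈ AddSubgroup.zmultiples (1 : ℚ), expHom q = 0 := by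
  rintro q ⟨n, rfl⟩
  show (Units.mk0 (Complex.exp (2 * Real.pi * Complex.I * ((n • (1:ℚ) : ℚ) : ℂ)))
    (Complex.exp_ne_zero _) : ℂˣ) = 1
  ext
  simp only [Units.val_mk0, Units.val_one]
  have hcast : ((n • (1:ℚ) : ℚ) : ℂ) = (n : ℂ) := by simp
  rw [hcast, mul_comm]
  exact Complex.exp_int_mul_two_pi_mul_I n

/-- the induced hom from `AddCircle (1:ℚ)` -/
def circHom : AddCircle (1 : ℚ) →+ Additive ℂˣ :=
  QuotientAddGroup.lift (AddSubgroup.zmultiples (1 : ℚ)) expHom expHom_ker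

lemma circHom_eq_zero {y : AddCircle (1 : ℚ)} (hy : circHom y = 0) : y = 0 := by
  induction y using QuotientAddGroup.induction_on with
  | H q =>
    have h1 : expHom q = 0 := hy
    have h2 : Complex.exp (2 * Real.pi * Complex.I * (q : ℂ)) = 1 := by
      have := congrArg (fun u : Additive ℂˣ => ((Additive.toMul u : ℂˣ) : ℂ)) h1
      simpa [expHom] using this
    rw [Complex.exp_eq_one_iff] at h2
    obtain ⟨n, hn⟩ := h2
    have h2pi : (2 * (Real.pi : ℂ) * Complex.I : ℂ) ≠ 0 :=
      mul_ne_zero (mul_ne_zero two_ne_zero (Complex.ofReal_ne_zero.mpr Real.pi_ne_zero))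
        Complex.I_ne_zero
    rw [mul_comm (n : ℂ)] at hn
    have hq : (q : ℂ) = (n : ℂ) := mul_left_cancel₀ h2pi hn
    have hq' : q = (n : ℚ) := by exact_mod_cast hq
    apply (QuotientAddGroup.eq_zero_iff q).mpr
    exact ⟨n, by simp [hq']⟩

/-- characters of a commutative group into `ℂˣ` separate points -/
lemma exists_char {M : Type*} [CommGroup M] {x : M} (hx : x ≠ 1) :
    ∃ φ : M →* ℂˣ, φ x ≠ 1 := by
  have hx' : Additive.ofMul x ≠ (0 : Additive M) := by
    simpa [ofMul_eq_zero] using hx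
  obtain ⟨χ, hχ⟩ := CharacterModule.exists_character_apply_ne_zero_of_ne_zero hx'
  refine ⟨{ toFun := fun m => Additive.toMul (circHom (χ (Additive.ofMul m)))
            map_one' := by
              show Additive.toMul (circHom (χ (Additive.ofMul (1 : M)))) = 1
              rw [toMul_eq_one, ofMul_eq_zero.mpr rfl, map_zero, map_zero]
            map_mul' := by
              intro a b
              show Additive.toMul (circHom (χ (Additive.ofMul (a * b)))) = _
              rw [ofMul_mul, map_add, map_add, toMul_add] }, ?_⟩
  intro hcon
  apply hχ
  apply circHom_eq_zero
  exact toMul_eq_one.mp hcon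

end EnvAux


open EnvAux

/-- If the commutator subgroup of `A(G)` has cardinality strictly greater than the
commutator subgroup of a finite group `G`, then `G` has a symmetric 2-cocycle valued
in `ℂˣ` that is not a coboundary. -/
theorem exists_symm_cocycle_not_coboundary_of_card_commutator_lt
    (G : Type*) [Group G] [Fintype G]
    (h : Cardinal.mk ↥(commutator G) < Cardinal.mk ↥(commutator (EnvelopingGroup G))) :
    ∃ α : G → G → ℂˣ, IsTwoCocycle α ∧ IsSymmCocycle α ∧ ¬ IsCoboundary α := by
  classical
  -- Step 1: find a nontrivial element of the commutator subgroup in the kernel of `pr`.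
  have hEx : ∃ x : EnvelopingGroup G,
      x ∈ commutator (EnvelopingGroup G) ∧ pr x = 1 ∧ x ≠ 1 := by
    by_contra hno
    push_neg at hno
    have hmem : ∀ y : ↥(commutator (EnvelopingGroup G)),
        pr (y : EnvelopingGroup G) ∈ commutator G := by
      intro y
      have h1 : (Subgroup.map (pr (G := G)) (commutator (EnvelopingGroup G))) ≤ commutator G := by
        rw [commutator_def, Subgroup.map_commutator]
        exact Subgroup.commutator_mono le_top le_top
      exact h1 (Subgroup.mem_map_of_mem _ y.2)
    have finj : Function.Injective
        (fun y : ↥(commutator (EnvelopingGroup G)) => (⟨pr y, hmem y⟩ : ↥(commutator G))) := by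
      intro y z hyz
      have hvals : pr (y : EnvelopingGroup G) = pr (z : EnvelopingGroup G) :=
        congrArg Subtype.val hyz
      have hpr : pr ((y : EnvelopingGroup G) * (z : EnvelopingGroup G)⁻¹) = 1 := by
        rw [map_mul, map_inv, hvals]; group
      have hmem2 : ((y : EnvelopingGroup G) * (z : EnvelopingGroup G)⁻¹)
          ∈ commutator (EnvelopingGroup G) := mul_mem y.2 (inv_mem z.2)
      have := hno _ hmem2 hpr
      exact Subtype.ext (mul_inv_eq_one.mp this)
    exact absurd (Cardinal.mk_le_of_injective finj) (not_le.mpr h)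
  obtain ⟨x, hxcomm, hxpr, hxne⟩ := hEx
  have hxc : x ∈ Subgroup.center (EnvelopingGroup G) := central_of_pr_eq_one hxpr
  -- Step 2: a character of the center not vanishing at `x`.
  letI : CommGroup ↥(Subgroup.center (EnvelopingGroup G)) :=
    { mul_comm := fun a b => Subtype.ext ((Subgroup.mem_center_iff.mp b.2) a) }
  obtain ⟨φ, hφ⟩ := exists_char (M := ↥(Subgroup.center (EnvelopingGroup G)))
    (x := ⟨x, hxc⟩) (by
      intro hcon
      exact hxne (congrArg Subtype.val hcon))
  refine ⟨fun g h => φ ⟨c g h, c_central g h⟩, ?_, ?_, ?_⟩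
  · -- cocycle identity
    intro g h k
    have key : ((⟨c g h, c_central g h⟩ : Subgroup.center (EnvelopingGroup G)) *
        ⟨c (g * h) k, c_central (g * h) k⟩)
        = (⟨c g (h * k), c_central g (h * k)⟩ : Subgroup.center (EnvelopingGroup G)) *
          ⟨c h k, c_central h k⟩ := Subtype.ext (by simpa using c_cocycle g h k)
    rw [← map_mul, ← map_mul, key]
  · -- symmetry
    intro g h
    exact congrArg φ (Subtype.ext (c_symm g h))
  · -- not a coboundary
    rintro ⟨β, hβ⟩
    have hβ' : ∀ g h : G, φ ⟨c g h, c_central g h⟩ = β g * β h * (β (g * h))⁻¹ := hβ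
    -- β is invariant under conjugation
    have hβinv : ∀ g h : G, β (g * h * g⁻¹) = β h := by
      intro g h
      have h1 : φ ⟨c g h, c_central g h⟩ = φ ⟨c (g * h * g⁻¹) g, c_central (g * h * g⁻¹) g⟩ :=
        congrArg φ (Subtype.ext (c_quandle g h))
      rw [hβ', hβ'] at h1
      rw [show g * h * g⁻¹ * g = g * h from by group] at h1
      have h2 : β g * β h = β (g * h * g⁻¹) * β g := mul_right_cancel h1
      rw [mul_comm (β (g * h * g⁻¹)) (β g)] at h2
      exact (mul_left_cancel h2).symm
    -- β induces a homomorphism L on the enveloping group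
    have hrels : ∀ r ∈ conjQuandleRels G, FreeGroup.lift β r = 1 := by
      rintro r ⟨g, h, rfl⟩
      rw [map_mul, map_mul, map_mul, map_inv, map_inv, FreeGroup.lift_apply_of, FreeGroup.lift_apply_of,
        FreeGroup.lift_apply_of, hβinv g h]
      rw [mul_comm (β g) (β h)]
      group
    set L : EnvelopingGroup G →* ℂˣ := PresentedGroup.toGroup hrels with hL
    -- the subgroup generated by the `c g h`
    set N₀ : Subgroup (EnvelopingGroup G) := Subgroup.closure {a | ∃ g h : G, a = c g h}
      with hN₀
    have hclZ : Subgroup.closure {a : EnvelopingGroup G | ∃ g h : G, a = c g h}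
        ≤ Subgroup.center (EnvelopingGroup G) := by
      apply Subgroup.closure_le _ |>.mpr
      rintro a ⟨g, h, rfl⟩
      exact c_central g h
    have hN₀Z : N₀ ≤ Subgroup.center (EnvelopingGroup G) := by rw [hN₀]; exact hclZ
    have hN₀n : N₀.Normal := by
      constructor
      intro n hn g
      have hcen := Subgroup.mem_center_iff.mp (hN₀Z hn)
      have : g * n * g⁻¹ = n := by rw [hcen g]; group
      rwa [this]
    have hmk1 : ∀ g h : G, (QuotientGroup.mk' N₀) (c g h) = 1 := fun g h =>
      (QuotientGroup.eq_one_iff _).mpr (Subgroup.subset_closure ⟨g, h, rfl⟩)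
    -- the section hom σ : G → A/N₀
    let σ : G →* EnvelopingGroup G ⧸ N₀ :=
      { toFun := fun g => (QuotientGroup.mk' N₀) (e g)
        map_one' := by
          show (QuotientGroup.mk' N₀) (e (1 : G)) = 1
          have h1 : c (1 : G) 1 = e (1 : G) := by
            simp [c]
          rw [← h1]; exact hmk1 1 1
        map_mul' := by
          intro g h
          show (QuotientGroup.mk' N₀) (e (g * h))
            = (QuotientGroup.mk' N₀) (e g) * (QuotientGroup.mk' N₀) (e h)
          rw [← map_mul, ← c_mul_e g h, map_mul, hmk1 g h, one_mul] }
    have hhom : (QuotientGroup.mk' N₀) = σ.comp pr := by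
      apply PresentedGroup.ext
      intro g
      show (QuotientGroup.mk' N₀) (e g) = σ (pr (e g))
      rw [pr_e]
      rfl
    have hker : ∀ a : EnvelopingGroup G, pr a = 1 → a ∈ N₀ := by
      intro a ha
      have : (QuotientGroup.mk' N₀) a = 1 := by
        rw [hhom]
        show σ (pr a) = 1
        rw [ha, map_one]
      exact (QuotientGroup.eq_one_iff _).mp this
    -- L agrees with φ on N₀
    have hLφ : ∀ a, a ∈ N₀ → ∀ (hc : a ∈ Subgroup.center (EnvelopingGroup G)),
        L a = φ ⟨a, hc⟩ := by
      intro a ha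
      rw [hN₀] at ha
      induction ha using Subgroup.closure_induction with
      | mem a ha =>
        obtain ⟨g, h, rfl⟩ := ha
        intro hc
        have hLc : L (c g h) = β g * β h * (β (g * h))⁻¹ := by
          rw [c, map_mul, map_mul, map_inv]
          rw [show L (e g) = β g from PresentedGroup.toGroup.of hrels,
            show L (e h) = β h from PresentedGroup.toGroup.of hrels,
            show L (e (g * h)) = β (g * h) from PresentedGroup.toGroup.of hrels]
        rw [hLc]
        exact (hβ' g h).symm
      | one => intro hc; rw [map_one]; exact (map_one φ).symm
      | mul a b ha hb iha ihb =>
        intro hc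
        rw [map_mul, iha (hclZ ha), ihb (hclZ hb), ← map_mul]
        rfl
      | inv a ha iha =>
        intro hc
        rw [map_inv, iha (hclZ ha), ← map_inv]
        rfl
    have hLx : L x = φ ⟨x, hxc⟩ := hLφ x (hker x hxpr) hxc
    have hL1 : L x = 1 := Abelianization.commutator_subset_ker L hxcomm
    exact hφ (by rw [← hLx, hL1])
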